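/- arXiv:1608.01635 — 3 statements merged into one kernel-verified Lean document; each statement's English description precedes it below -/
import Mathlib

section
/- Let δ > 0 and let h₁, h₂ : [0,4π] → ℝ be as in Construction 2.1. Then for every θ ∈ [0,2π], (h₁(θ) − h₁(θ + 2π))² + (h₂(θ) − h₂(θ + 2π))² ≥ δ²/4; equivalently, the infimum over θ ∈ [0,2π] of the Euclidean norm ‖(h₁(θ) − h₁(θ+2π), h₂(θ) − h₂(θ+2π))‖ is at least δ/2. -/
open Set Real

/-- The helper function `h₁` of Construction 2.1: `h₁(θ) = (δ/(2π))·(2π − |θ − 2π|)`. -/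
noncomputable def helperH1 (δ θ : ℝ) : ℝ := (δ / (2 * π)) * (2 * π - |θ - 2 * π|)

/-- The helper function `h₂` of Construction 2.1: `h₂(θ) = −(δ/π)θ` on `[0,π]`,
`h₂(θ) = −δ + (δ/π)(θ−π)` on `[π,3π]`, `h₂(θ) = δ − (δ/π)(θ−3π)` on `[3π,4π]`. -/
noncomputable def helperH2 (δ θ : ℝ) : ℝ :=
  if θ ≤ π then -(δ / π) * θ
  else if θ ≤ 3 * π then -δ + (δ / π) * (θ - π)
  else δ - (δ / π) * (θ - 3 * π)

/-- The key lower bound (equation (3)) of Construction 2.1: for every `θ ∈ [0,2π]`,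
`(h₁(θ) − h₁(θ+2π))² + (h₂(θ) − h₂(θ+2π))² ≥ δ²/4`; equivalently the Euclidean norm of
`(h₁(θ) − h₁(θ+2π), h₂(θ) − h₂(θ+2π))` is at least `δ/2`. -/
theorem helper_functions_sheet_separation (δ : ℝ) (hδ : 0 < δ) :
    ∀ θ ∈ Icc (0:ℝ) (2 * π),
      δ ^ 2 / 4 ≤ (helperH1 δ θ - helperH1 δ (θ + 2 * π)) ^ 2
        + (helperH2 δ θ - helperH2 δ (θ + 2 * π)) ^ 2 := by
  rintro θ ⟨h0, h2π⟩
  have hπ : (0:ℝ) < π := pi_pos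
  have hne : (π:ℝ) ≠ 0 := ne_of_gt hπ
  have h1a : helperH1 δ θ = (δ / (2 * π)) * θ := by
    unfold helperH1
    rw [abs_of_nonpos (by linarith)]; ring
  have h1b : helperH1 δ (θ + 2 * π) = (δ / (2 * π)) * (2 * π - θ) := by
    unfold helperH1
    rw [show θ + 2 * π - 2 * π = θ by ring, abs_of_nonneg h0]
  have hn1 : ¬ (θ + 2 * π ≤ π) := by linarith
  by_cases hc : θ ≤ π
  · have h2a : helperH2 δ θ = -(δ / π) * θ := by unfold helperH2; rw [if_pos hc]
    have h2b : helperH2 δ (θ + 2 * π) = -δ + (δ / π) * (θ + 2 * π - π) := by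
      unfold helperH2; rw [if_neg hn1, if_pos (by linarith)]
    rw [h1a, h1b, h2a, h2b]
    have key : π ^ 2 ≤ ((θ - π) ^ 2 + 4 * θ ^ 2) * 4 := by nlinarith [sq_nonneg (5 * θ - π), sq_nonneg θ, sq_nonneg (θ - π)]
    have e1 : (δ / (2 * π)) * θ - (δ / (2 * π)) * (2 * π - θ) = (δ / π) * (θ - π) := by
      field_simp; ring
    have e2 : -(δ / π) * θ - (-δ + (δ / π) * (θ + 2 * π - π)) = -((δ / π) * (2 * θ)) := by
      field_simp; ring
    rw [e1, e2]
    rw [div_le_iff₀ (by norm_num : (0:ℝ) < 4)]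
    have : ((δ / π) * (θ - π)) ^ 2 + (-((δ / π) * (2 * θ))) ^ 2
        = (δ / π) ^ 2 * ((θ - π) ^ 2 + 4 * θ ^ 2) := by ring
    rw [this]
    have hd2 : δ ^ 2 = (δ / π) ^ 2 * π ^ 2 := by field_simp
    rw [hd2]
    have hp : (0:ℝ) ≤ (δ / π) ^ 2 := sq_nonneg _
    nlinarith [key, hp]
  · have h2a : helperH2 δ θ = -δ + (δ / π) * (θ - π) := by
      unfold helperH2; rw [if_neg hc, if_pos (by linarith)]
    have h2b : helperH2 δ (θ + 2 * π) = δ - (δ / π) * (θ + 2 * π - 3 * π) := by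
      unfold helperH2; rw [if_neg hn1, if_neg (by push_neg; push_neg at hc; linarith)]
    rw [h1a, h1b, h2a, h2b]
    have e1 : (δ / (2 * π)) * θ - (δ / (2 * π)) * (2 * π - θ) = (δ / π) * (θ - π) := by
      field_simp; ring
    have e2 : (-δ + (δ / π) * (θ - π)) - (δ - (δ / π) * (θ + 2 * π - 3 * π)) = (δ / π) * (2 * (θ - 2 * π)) := by
      field_simp; ring
    rw [e1, e2]
    rw [div_le_iff₀ (by norm_num : (0:ℝ) < 4)]
    have : ((δ / π) * (θ - π)) ^ 2 + ((δ / π) * (2 * (θ - 2 * π))) ^ 2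
        = (δ / π) ^ 2 * ((θ - π) ^ 2 + 4 * (θ - 2 * π) ^ 2) := by ring
    rw [this]
    have key : π ^ 2 ≤ ((θ - π) ^ 2 + 4 * (θ - 2 * π) ^ 2) * 4 := by
      nlinarith [sq_nonneg (5 * θ - 9 * π)]
    have hd2 : δ ^ 2 = (δ / π) ^ 2 * π ^ 2 := by field_simp
    rw [hd2]
    nlinarith [key, sq_nonneg (δ / π)]
end

section
/- Let δ > 0, l > 0, let h₁, h₂ : [0,4π] → ℝ and φ : [0,l] → ℝ be the helper functions of Construction 2.1, and define Ψ : [0,l] × [0,4π] → ℝ² by Ψ(r,θ) = (φ(r)h₁(θ), φ(r)h₂(θ)). Then for every r ∈ [0,l] and every θ ∈ [0,2π], ‖Ψ(r,θ) − Ψ(r, θ + 2π)‖ ≥ (δ/2)·φ(r), where ‖·‖ is the Euclidean norm on ℝ². -/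
open Set Real

/-- The cut-off function `φ` of Construction 2.1 (equation (4)), with width parameter `l`. -/
noncomputable def cutOff (l r : ℝ) : ℝ :=
  if r ≤ l / 5 then 5 * r
  else if r ≤ 4 * l / 5 then l
  else 5 * (l - r)

/-- The map `Ψ(r,θ) = (φ(r)h₁(θ), φ(r)h₂(θ))` of Construction 2.1, as a map into `ℝ²`
(given by its two components). -/
noncomputable def PsiMap (δ l r θ : ℝ) : ℝ × ℝ :=
  (cutOff l r * helperH1 δ θ, cutOff l r * helperH2 δ θ)

/-- The fiber-separation estimate (equation (5)) of Construction 2.1: for `r ∈ [0,l]` and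
`θ ∈ [0,2π]`, the Euclidean distance between `Ψ(r,θ)` and `Ψ(r,θ+2π)` is at least
`(δ/2)·φ(r)`. -/
theorem Psi_fiber_separation (δ l : ℝ) (hδ : 0 < δ) (hl : 0 < l) :
    ∀ r ∈ Icc (0:ℝ) l, ∀ θ ∈ Icc (0:ℝ) (2 * π),
      (δ / 2) * cutOff l r ≤
        Real.sqrt (((PsiMap δ l r θ).1 - (PsiMap δ l r (θ + 2 * π)).1) ^ 2
          + ((PsiMap δ l r θ).2 - (PsiMap δ l r (θ + 2 * π)).2) ^ 2) := by
  intro r hr θ hθ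
  have hπ := Real.pi_pos
  have hφ : 0 ≤ cutOff l r := by
    unfold cutOff
    rcases hr with ⟨hr0, hrl⟩
    split_ifs with h1 h2 <;> nlinarith
  rw [Real.le_sqrt (mul_nonneg (by positivity) hφ) (by positivity)]
  have hθ0 := hθ.1
  have hθ2 := hθ.2
  have habs1 : |θ - 2*π| = 2*π - θ := by rw [abs_of_nonpos] <;> [ring; linarith]
  have habs2 : |θ + 2*π - 2*π| = θ := by rw [abs_of_nonneg] <;> linarith
  simp only [PsiMap, helperH1, habs1, habs2]
  set c := cutOff l r with hc
  rcases le_or_gt θ π with h | h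
  · have e2 : helperH2 δ θ = -(δ/π) * θ := if_pos h
    have e2' : helperH2 δ (θ + 2*π) = -δ + (δ/π) * (θ + 2*π - π) := by
      rw [helperH2, if_neg (by linarith), if_pos (by linarith)]
    rw [e2, e2']
    have key : (δ/2)^2 ≤ (δ/(2*π) * (2*π - (2*π - θ)) - δ/(2*π) * (2*π - θ))^2
        + (-(δ/π) * θ - (-δ + δ/π * (θ + 2*π - π)))^2 := by
      have hπ' : π ≠ 0 := ne_of_gt hπ
      field_simp
      nlinarith [sq_nonneg (5*θ - π), sq_nonneg δ, sq_nonneg (δ*(5*θ-π)), mul_pos hπ hπ]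
    calc (δ/2 * c)^2 = c^2 * (δ/2)^2 := by ring
      _ ≤ c^2 * ((δ/(2*π) * (2*π - (2*π - θ)) - δ/(2*π) * (2*π - θ))^2
          + (-(δ/π) * θ - (-δ + δ/π * (θ + 2*π - π)))^2) := by
          exact mul_le_mul_of_nonneg_left key (sq_nonneg c)
      _ = _ := by ring
  · have e2 : helperH2 δ θ = -δ + (δ/π) * (θ - π) := by
      rw [helperH2, if_neg (by linarith), if_pos (by linarith)]
    have e2' : helperH2 δ (θ + 2*π) = δ - (δ/π) * (θ + 2*π - 3*π) := by
      rw [helperH2, if_neg (by linarith), if_neg (by linarith)]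
    rw [e2, e2']
    have key : (δ/2)^2 ≤ (δ/(2*π) * (2*π - (2*π - θ)) - δ/(2*π) * (2*π - θ))^2
        + ((-δ + δ/π * (θ - π)) - (δ - δ/π * (θ + 2*π - 3*π)))^2 := by
      have hπ' : π ≠ 0 := ne_of_gt hπ
      field_simp
      nlinarith [sq_nonneg (5*θ - 9*π), sq_nonneg (δ*(5*θ-9*π)), mul_pos hπ hπ]
    calc (δ/2 * c)^2 = c^2 * (δ/2)^2 := by ring
      _ ≤ c^2 * ((δ/(2*π) * (2*π - (2*π - θ)) - δ/(2*π) * (2*π - θ))^2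
          + ((-δ + δ/π * (θ - π)) - (δ - δ/π * (θ + 2*π - 3*π)))^2) := by
          exact mul_le_mul_of_nonneg_left key (sq_nonneg c)
      _ = _ := by ring
end

section
/- Let δ > 0, l > 0 and let Ψ : [0,l] × [0,4π] → ℝ² be the map Ψ(r,θ) = (φ(r)h₁(θ), φ(r)h₂(θ)) of Construction 2.1. Then for all (r,θ), (r',θ') ∈ [0,l] × [0,4π] one has ‖Ψ(r,θ) − Ψ(r',θ')‖ ≤ 8δ·( |r − r'| + max(r,r')·|θ − θ'| ). -/
open Set Real

lemma cutOff_eq_min (l r : ℝ) (hl : 0 < l) :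
    cutOff l r = min (min (5 * r) l) (5 * (l - r)) := by
  unfold cutOff
  split_ifs with h1 h2 <;> simp only [min_def] <;> split_ifs <;> linarith

lemma cutOff_lip (l : ℝ) (hl : 0 < l) (r r' : ℝ) :
    |cutOff l r - cutOff l r'| ≤ 5 * |r - r'| := by
  rw [cutOff_eq_min l r hl, cutOff_eq_min l r' hl]
  have h1 : |min (min (5*r) l) (5*(l-r)) - min (min (5*r') l) (5*(l-r'))| ≤
      max (|min (5*r) l - min (5*r') l|) (|5*(l-r) - 5*(l-r')|) :=
    abs_min_sub_min_le_max _ _ _ _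
  have h2 : |min (5*r) l - min (5*r') l| ≤ max (|5*r - 5*r'|) (|l - l|) :=
    abs_min_sub_min_le_max _ _ _ _
  have e1 : |5*r - 5*r'| = 5 * |r - r'| := by
    rw [show (5:ℝ)*r - 5*r' = 5*(r-r') by ring, abs_mul, abs_of_nonneg]; norm_num
  have e2 : |5*(l-r) - 5*(l-r')| = 5 * |r - r'| := by
    rw [show (5:ℝ)*(l-r) - 5*(l-r') = 5*(r'-r) by ring, abs_mul, abs_sub_comm,
      abs_of_nonneg] ; norm_num
  refine h1.trans (max_le (h2.trans (max_le e1.le ?_)) e2.le)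
  have : (0:ℝ) ≤ 5 * |r - r'| := by positivity
  simpa using this

lemma cutOff_nonneg (l r : ℝ) (hl : 0 < l) (hr : r ∈ Icc (0:ℝ) l) : 0 ≤ cutOff l r := by
  rw [cutOff_eq_min l r hl]
  exact le_min (le_min (by linarith [hr.1]) hl.le) (by linarith [hr.2])

lemma cutOff_le (l r : ℝ) (hl : 0 < l) : cutOff l r ≤ 5 * r := by
  rw [cutOff_eq_min l r hl]
  exact ((min_le_left _ _).trans (min_le_left _ _))

lemma h1_abs_le (δ θ : ℝ) (hδ : 0 < δ) (hθ : θ ∈ Icc (0:ℝ) (4 * π)) :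
    |helperH1 δ θ| ≤ δ := by
  have hπ := pi_pos
  obtain ⟨hθ0, hθ4⟩ := hθ
  have hb : |θ - 2*π| ≤ 2*π := by
    rw [abs_le]; constructor <;> linarith
  have hb0 : 0 ≤ |θ - 2*π| := abs_nonneg _
  have hc : δ / (2*π) * (2*π) = δ := div_mul_cancel₀ δ (by positivity)
  have hc0 : 0 ≤ δ / (2*π) := by positivity
  unfold helperH1
  rw [abs_le]; constructor <;> nlinarith

lemma h1_lip (δ θ θ' : ℝ) (hδ : 0 < δ) :
    |helperH1 δ θ - helperH1 δ θ'| ≤ δ * |θ - θ'| := by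
  have hπ := pi_gt_three
  have e : helperH1 δ θ - helperH1 δ θ' = (δ / (2*π)) * (|θ' - 2*π| - |θ - 2*π|) := by
    unfold helperH1; ring
  rw [e, abs_mul, abs_of_nonneg (by positivity : (0:ℝ) ≤ δ / (2*π))]
  have h1 : |(|θ' - 2*π| - |θ - 2*π|)| ≤ |θ' - θ| := by
    have := abs_abs_sub_abs_le_abs_sub (θ' - 2*π) (θ - 2*π)
    simpa using this
  have h2 : |θ' - θ| = |θ - θ'| := abs_sub_comm _ _
  have h3 : δ / (2*π) ≤ δ := by
    rw [div_le_iff₀ (by linarith)]; nlinarith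
  calc δ / (2*π) * |(|θ' - 2*π| - |θ - 2*π|)| ≤ δ / (2*π) * |θ - θ'| := by
        apply mul_le_mul_of_nonneg_left _ (by positivity); rw [← h2]; exact h1
    _ ≤ δ * |θ - θ'| := mul_le_mul_of_nonneg_right h3 (abs_nonneg _)

lemma h2_eq (δ θ : ℝ) : helperH2 δ θ = (δ / π) * (|θ - π| - |θ - 3*π| - θ + 2*π) := by
  have hπ := pi_pos
  unfold helperH2
  split_ifs with h1 h2
  · rw [abs_of_nonpos (by linarith), abs_of_nonpos (by linarith)]; ring
  · rw [abs_of_nonneg (by linarith), abs_of_nonpos (by linarith)]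
    field_simp; ring
  · rw [abs_of_nonneg (by linarith), abs_of_nonneg (by linarith)]
    field_simp; ring

lemma h2_abs_le (δ θ : ℝ) (hδ : 0 < δ) (hθ : θ ∈ Icc (0:ℝ) (4 * π)) :
    |helperH2 δ θ| ≤ δ := by
  have hπ := pi_pos
  have hc : δ / π * π = δ := div_mul_cancel₀ δ (by positivity)
  have hc0 : 0 ≤ δ / π := by positivity
  obtain ⟨hθ0, hθ4⟩ := hθ
  unfold helperH2
  split_ifs with h1 h2 <;> rw [abs_le] <;> constructor <;> nlinarith

lemma h2_lip (δ θ θ' : ℝ) (hδ : 0 < δ) :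
    |helperH2 δ θ - helperH2 δ θ'| ≤ δ * |θ - θ'| := by
  have hπ := pi_gt_three
  rw [h2_eq, h2_eq]
  have e : (δ / π) * (|θ - π| - |θ - 3*π| - θ + 2*π)
      - (δ / π) * (|θ' - π| - |θ' - 3*π| - θ' + 2*π)
      = (δ / π) * ((|θ - π| - |θ' - π|) - (|θ - 3*π| - |θ' - 3*π|) - (θ - θ')) := by ring
  rw [e, abs_mul, abs_of_nonneg (by positivity : (0:ℝ) ≤ δ / π)]
  have a1 : |(|θ - π| - |θ' - π|)| ≤ |θ - θ'| := by
    have := abs_abs_sub_abs_le_abs_sub (θ - π) (θ' - π)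
    simpa using this
  have a2 : |(|θ - 3*π| - |θ' - 3*π|)| ≤ |θ - θ'| := by
    have := abs_abs_sub_abs_le_abs_sub (θ - 3*π) (θ' - 3*π)
    simpa using this
  have a3 : |((|θ - π| - |θ' - π|) - (|θ - 3*π| - |θ' - 3*π|) - (θ - θ'))| ≤ 3 * |θ - θ'| := by
    have t1 := abs_sub (( |θ - π| - |θ' - π|) - (|θ - 3*π| - |θ' - 3*π|)) (θ - θ')
    have t2 := abs_sub (|θ - π| - |θ' - π|) (|θ - 3*π| - |θ' - 3*π|)
    linarith
  have h3 : δ / π * 3 ≤ δ := by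
    rw [div_mul_eq_mul_div, div_le_iff₀ (by linarith)]; nlinarith
  calc δ / π * |((|θ - π| - |θ' - π|) - (|θ - 3*π| - |θ' - 3*π|) - (θ - θ'))|
      ≤ δ / π * (3 * |θ - θ'|) := mul_le_mul_of_nonneg_left a3 (by positivity)
    _ = (δ / π * 3) * |θ - θ'| := by ring
    _ ≤ δ * |θ - θ'| := mul_le_mul_of_nonneg_right h3 (abs_nonneg _)

/-- The quantitative Lipschitz bound (upper bound in equation (7)) of Construction 2.1 with
respect to the polar metric: for all `(r,θ), (r',θ') ∈ [0,l] × [0,4π]`,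
`‖Ψ(r,θ) − Ψ(r',θ')‖ ≤ 8δ·(|r − r'| + max(r,r')·|θ − θ'|)`. -/
theorem Psi_lipschitz_bound (δ l : ℝ) (hδ : 0 < δ) (hl : 0 < l) :
    ∀ r ∈ Icc (0:ℝ) l, ∀ θ ∈ Icc (0:ℝ) (4 * π),
      ∀ r' ∈ Icc (0:ℝ) l, ∀ θ' ∈ Icc (0:ℝ) (4 * π),
        Real.sqrt (((PsiMap δ l r θ).1 - (PsiMap δ l r' θ').1) ^ 2
            + ((PsiMap δ l r θ).2 - (PsiMap δ l r' θ').2) ^ 2)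
          ≤ 8 * δ * (|r - r'| + max r r' * |θ - θ'|) := by
  intro r hr θ hθ r' hr' θ' hθ'
  set M : ℝ := |r - r'| + max r r' * |θ - θ'| with hM
  have hmax0 : 0 ≤ max r r' := le_trans hr.1 (le_max_left _ _)
  have hM0 : 0 ≤ M := add_nonneg (abs_nonneg _) (mul_nonneg hmax0 (abs_nonneg _))
  have key : ∀ h : ℝ → ℝ, (∀ t ∈ Icc (0:ℝ) (4*π), |h t| ≤ δ) →
      (∀ t t' : ℝ, |h t - h t'| ≤ δ * |t - t'|) →
      |cutOff l r * h θ - cutOff l r' * h θ'| ≤ 5 * δ * M := by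
    intro h hb hlip
    have e : cutOff l r * h θ - cutOff l r' * h θ'
        = (cutOff l r - cutOff l r') * h θ + cutOff l r' * (h θ - h θ') := by ring
    rw [e]
    have t1 : |(cutOff l r - cutOff l r') * h θ| ≤ (5 * |r - r'|) * δ := by
      rw [abs_mul]
      exact mul_le_mul (cutOff_lip l hl r r') (hb θ hθ) (abs_nonneg _) (by positivity)
    have t2 : |cutOff l r' * (h θ - h θ')| ≤ (5 * max r r') * (δ * |θ - θ'|) := by
      rw [abs_mul]
      have hc : |cutOff l r'| ≤ 5 * max r r' := by
        rw [abs_of_nonneg (cutOff_nonneg l r' hl hr')]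
        calc cutOff l r' ≤ 5 * r' := cutOff_le l r' hl
          _ ≤ 5 * max r r' := by nlinarith [le_max_right r r']
      exact mul_le_mul hc (hlip θ θ') (abs_nonneg _) (by positivity)
    calc |(cutOff l r - cutOff l r') * h θ + cutOff l r' * (h θ - h θ')|
        ≤ |(cutOff l r - cutOff l r') * h θ| + |cutOff l r' * (h θ - h θ')| := abs_add_le _ _
      _ ≤ (5 * |r - r'|) * δ + (5 * max r r') * (δ * |θ - θ'|) := add_le_add t1 t2
      _ = 5 * δ * M := by rw [hM]; ring
  have b1 : |cutOff l r * helperH1 δ θ - cutOff l r' * helperH1 δ θ'| ≤ 5 * δ * M :=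
    key (helperH1 δ) (fun t ht => h1_abs_le δ t hδ ht) (fun t t' => h1_lip δ t t' hδ)
  have b2 : |cutOff l r * helperH2 δ θ - cutOff l r' * helperH2 δ θ'| ≤ 5 * δ * M :=
    key (helperH2 δ) (fun t ht => h2_abs_le δ t hδ ht) (fun t t' => h2_lip δ t t' hδ)
  set Δ1 := cutOff l r * helperH1 δ θ - cutOff l r' * helperH1 δ θ'
  set Δ2 := cutOff l r * helperH2 δ θ - cutOff l r' * helperH2 δ θ'
  have hsum : Δ1 ^ 2 + Δ2 ^ 2 ≤ (8 * δ * M) ^ 2 := by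
    have s1 : Δ1 ^ 2 ≤ (5 * δ * M) ^ 2 := by
      rw [← sq_abs Δ1]; exact pow_le_pow_left₀ (abs_nonneg _) b1 2
    have s2 : Δ2 ^ 2 ≤ (5 * δ * M) ^ 2 := by
      rw [← sq_abs Δ2]; exact pow_le_pow_left₀ (abs_nonneg _) b2 2
    nlinarith [mul_nonneg (mul_nonneg (by norm_num : (0:ℝ) ≤ 5) hδ.le) hM0]
  have : Real.sqrt (((PsiMap δ l r θ).1 - (PsiMap δ l r' θ').1) ^ 2
      + ((PsiMap δ l r θ).2 - (PsiMap δ l r' θ').2) ^ 2)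
      = Real.sqrt (Δ1 ^ 2 + Δ2 ^ 2) := by simp [PsiMap, Δ1, Δ2]
  rw [this]
  calc Real.sqrt (Δ1 ^ 2 + Δ2 ^ 2) ≤ Real.sqrt ((8 * δ * M) ^ 2) :=
        Real.sqrt_le_sqrt hsum
    _ = 8 * δ * M := Real.sqrt_sq (by positivity)
end
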